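/- Let G be a finite nilpotent group. If for every prime p dividing |G| every Sylow p-subgroup of G satisfies the Ingleton inequality (as a group, with respect to all quadruples of its subgroups), then G satisfies the Ingleton inequality. -/

import Mathlib

/-- A group satisfies the Ingleton inequality if for any four subgroups
`H₁, H₂, H₃, H₄` one has
`|H₁∩H₂|·|H₁∩H₃|·|H₁∩H₄|·|H₂∩H₃|·|H₂∩H₄| ≤ |H₁|·|H₂|·|H₃∩H₄|·|H₁∩H₂∩H₃|·|H₁∩H₂∩H₄|`. -/
def SatisfiesIngleton (G : Type*) [Group G] : Prop :=
  ∀ H₁ H₂ H₃ H₄ : Subgroup G,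
    Nat.card (H₁ ⊓ H₂ : Subgroup G) * Nat.card (H₁ ⊓ H₃ : Subgroup G) *
      Nat.card (H₁ ⊓ H₄ : Subgroup G) * Nat.card (H₂ ⊓ H₃ : Subgroup G) *
      Nat.card (H₂ ⊓ H₄ : Subgroup G) ≤
    Nat.card H₁ * Nat.card H₂ * Nat.card (H₃ ⊓ H₄ : Subgroup G) *
      Nat.card (H₁ ⊓ H₂ ⊓ H₃ : Subgroup G) * Nat.card (H₁ ⊓ H₂ ⊓ H₄ : Subgroup G)

/-- In a group with a normal Sylow `p`-subgroup `P`, the intersection of any subgroup `H`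
with `P` (viewed inside `P`) has cardinality the `p`-part of `|H|`. -/
lemma card_subgroupOf_sylow_eq {G : Type*} [Group G] [Finite G] {p : ℕ} [hp : Fact p.Prime]
    (P : Sylow p G) (hN : (P : Subgroup G).Normal) (H : Subgroup G) :
    Nat.card (H.subgroupOf (P : Subgroup G)) = p ^ (Nat.card H).factorization p := by
  obtain ⟨Q⟩ : Nonempty (Sylow p H) := inferInstance
  -- the image of Q in G is a p-subgroup, hence contained in P (P is normal Sylow)
  have hmap : (Q : Subgroup H).map H.subtype ≤ (P : Subgroup G) := by
    have h1 := (Q.isPGroup'.map H.subtype).inf_normalizer_sylow P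
    erw [(Subgroup.normalizer_eq_top_iff).mpr hN, inf_top_eq] at h1
    rw [h1]; exact inf_le_right
  have hle : (Q : Subgroup H) ≤ ((P : Subgroup G)).subgroupOf H :=
    Subgroup.map_le_iff_le_comap.mp hmap
  -- (P ⊓ H viewed in H) is a p-group
  have hpg : IsPGroup p (((P : Subgroup G)).subgroupOf H) := by
    have : IsPGroup p ((H ⊓ (P : Subgroup G) : Subgroup G)) := P.isPGroup'.to_inf_right
    have e := Subgroup.subgroupOfEquivOfLe (inf_le_left : H ⊓ (P : Subgroup G) ≤ H)
    have := (this.of_equiv e.symm)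
    rwa [Subgroup.inf_subgroupOf_left] at this
  have hQeq : ((P : Subgroup G)).subgroupOf H = (Q : Subgroup H) := Q.is_maximal' hpg hle
  have e1 : Nat.card (H.subgroupOf (P : Subgroup G)) =
      Nat.card (((P : Subgroup G)).subgroupOf H) := by
    rw [← Subgroup.inf_subgroupOf_right H (P : Subgroup G),
      ← Subgroup.inf_subgroupOf_right (P : Subgroup G) H]
    rw [Nat.card_congr (Subgroup.subgroupOfEquivOfLe
      (inf_le_right : H ⊓ (P : Subgroup G) ≤ (P : Subgroup G))).toEquiv,
      Nat.card_congr (Subgroup.subgroupOfEquivOfLe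
      (inf_le_right : (P : Subgroup G) ⊓ H ≤ H)).toEquiv]
    rw [inf_comm]
  rw [e1, hQeq]
  exact Q.card_eq_multiplicity

/-- If every Sylow `p`-subgroup of a finite nilpotent group `G`
(for every prime `p` dividing `|G|`) satisfies the Ingleton inequality,
then `G` satisfies the Ingleton inequality. -/
theorem nilpotent_ingleton_of_sylow_ingleton
    (G : Type*) [Group G] [Finite G] [Group.IsNilpotent G]
    (hSyl : ∀ p : ℕ, p.Prime → p ∣ Nat.card G →
      ∀ P : Sylow p G, SatisfiesIngleton (P : Subgroup G)) :
    SatisfiesIngleton G := by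
  intro H₁ H₂ H₃ H₄
  have hpos : ∀ H : Subgroup G, 0 < Nat.card H := fun H => Nat.card_pos
  have hne : ∀ H : Subgroup G, Nat.card H ≠ 0 := fun H => (hpos H).ne'
  set a := Nat.card (H₁ ⊓ H₂ : Subgroup G) * Nat.card (H₁ ⊓ H₃ : Subgroup G) *
      Nat.card (H₁ ⊓ H₄ : Subgroup G) * Nat.card (H₂ ⊓ H₃ : Subgroup G) *
      Nat.card (H₂ ⊓ H₄ : Subgroup G) with ha
  set b := Nat.card H₁ * Nat.card H₂ * Nat.card (H₃ ⊓ H₄ : Subgroup G) *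
      Nat.card (H₁ ⊓ H₂ ⊓ H₃ : Subgroup G) * Nat.card (H₁ ⊓ H₂ ⊓ H₄ : Subgroup G) with hb
  have hm : ∀ {x y : ℕ}, x ≠ 0 → y ≠ 0 → x * y ≠ 0 := fun h1 h2 => Nat.mul_ne_zero h1 h2
  have ha0 : a ≠ 0 := hm (hm (hm (hm (hne _) (hne _)) (hne _)) (hne _)) (hne _)
  have hb0 : b ≠ 0 := hm (hm (hm (hm (hne _) (hne _)) (hne _)) (hne _)) (hne _)
  -- it suffices to prove divisibility
  suffices hdvd : a ∣ b from Nat.le_of_dvd (Nat.pos_of_ne_zero hb0) hdvd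
  rw [← Nat.factorization_le_iff_dvd ha0 hb0, Finsupp.le_def]
  intro p
  by_cases hp : p.Prime
  · by_cases hpd : p ∣ Nat.card G
    · haveI : Fact p.Prime := ⟨hp⟩
      obtain ⟨P⟩ : Nonempty (Sylow p G) := inferInstance
      have hN : (P : Subgroup G).Normal :=
        Sylow.normal_of_normalizerCondition (normalizerCondition_of_isNilpotent) P
      have hcard := fun H : Subgroup G => card_subgroupOf_sylow_eq P hN H
      have hIng := hSyl p hp hpd P (H₁.subgroupOf P) (H₂.subgroupOf P)
        (H₃.subgroupOf P) (H₄.subgroupOf P)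
      have hinf : ∀ A B : Subgroup G,
          A.subgroupOf (P : Subgroup G) ⊓ B.subgroupOf (P : Subgroup G)
            = (A ⊓ B).subgroupOf (P : Subgroup G) := fun A B =>
        (Subgroup.comap_inf A B _).symm
      simp only [hinf, hcard, ← pow_add] at hIng
      have hexp := (Nat.pow_le_pow_iff_right hp.one_lt).mp hIng
      rw [ha, hb]
      rw [Nat.factorization_mul (by repeat first | exact hne _ | apply Nat.mul_ne_zero) (hne _),
        Nat.factorization_mul (by repeat first | exact hne _ | apply Nat.mul_ne_zero) (hne _),
        Nat.factorization_mul (by repeat first | exact hne _ | apply Nat.mul_ne_zero) (hne _),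
        Nat.factorization_mul (hne _) (hne _),
        Nat.factorization_mul (by repeat first | exact hne _ | apply Nat.mul_ne_zero) (hne _),
        Nat.factorization_mul (by repeat first | exact hne _ | apply Nat.mul_ne_zero) (hne _),
        Nat.factorization_mul (by repeat first | exact hne _ | apply Nat.mul_ne_zero) (hne _),
        Nat.factorization_mul (hne _) (hne _)]
      simpa using hexp
    · have hnd : ¬ p ∣ a := by
        intro hpa
        rw [ha] at hpa
        rcases (Nat.Prime.dvd_mul hp).mp hpa with h | h
        · rcases (Nat.Prime.dvd_mul hp).mp h with h | h
          · rcases (Nat.Prime.dvd_mul hp).mp h with h | h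
            · rcases (Nat.Prime.dvd_mul hp).mp h with h | h
              · exact hpd (h.trans (Subgroup.card_subgroup_dvd_card _))
              · exact hpd (h.trans (Subgroup.card_subgroup_dvd_card _))
            · exact hpd (h.trans (Subgroup.card_subgroup_dvd_card _))
          · exact hpd (h.trans (Subgroup.card_subgroup_dvd_card _))
        · exact hpd (h.trans (Subgroup.card_subgroup_dvd_card _))
      rw [Nat.factorization_eq_zero_of_not_dvd hnd]
      exact Nat.zero_le _
  · rw [Nat.factorization_eq_zero_of_not_prime a hp]
    exact Nat.zero_le _
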